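/- Let G be a finite strategic game in which every Nash equilibrium payoff profile equals the minmax payoff profile. Then in any Nash equilibrium σ of the n-stage repeated game of G, for every non-terminal history h reached with positive probability under σ, the stage-strategy profile σ(h) is a Nash equilibrium of G. -/

import Mathlib

/-- A mixed strategy over a finite action set. -/
def IsMixed {α : Type} [Fintype α] (σ : α → ℝ) : Prop :=
  (∀ a, 0 ≤ σ a) ∧ ∑ a, σ a = 1

/-- The pure (point-mass) strategy on action `a`. -/
def pureS {α : Type} [DecidableEq α] (a : α) : α → ℝ := fun b => if b = a then 1 else 0

variable {N : Type} [Fintype N] [DecidableEq N] {A : N → Type}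
  [∀ i, Fintype (A i)] [∀ i, DecidableEq (A i)] [∀ i, Nonempty (A i)]

/-- Expected utility of a utility function under an independent mixed strategy profile. -/
def expU (u : (∀ i, A i) → ℝ) (σ : ∀ i, A i → ℝ) : ℝ :=
  ∑ a : ∀ i, A i, (∏ i, σ i (a i)) * u a

/-- Nash equilibrium of the finite strategic game with utilities `u`. -/
def IsNash (u : N → (∀ i, A i) → ℝ) (σ : ∀ i, A i → ℝ) : Prop :=
  (∀ i, IsMixed (σ i)) ∧
  ∀ i (τ : A i → ℝ), IsMixed τ → expU (u i) (Function.update σ i τ) ≤ expU (u i) σ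

/-- `vi` is the minmax payoff of player `i`: the least payoff the other players can
force on player `i` (who best-responds with a pure action). -/
def IsMinmaxVal (u : N → (∀ i, A i) → ℝ) (i : N) (vi : ℝ) : Prop :=
  IsLeast {x : ℝ | ∃ σ : ∀ j, A j → ℝ, (∀ j, IsMixed (σ j)) ∧
    x = Finset.univ.sup' Finset.univ_nonempty
          (fun a : A i => expU (u i) (Function.update σ i (pureS a)))} vi

/-- Probability that, starting from history `h`, the play under behavioral profile `σ`
follows exactly the sequence of action profiles `l`. -/
def histProb (σ : ∀ i, List (∀ j, A j) → A i → ℝ) :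
    List (∀ i, A i) → List (∀ i, A i) → ℝ
  | _, [] => 1
  | h, a :: rest => (∏ i, σ i h (a i)) * histProb σ (h ++ [a]) rest

/-- Expected average payoff of player `i` in the `n`-stage repeated game. -/
noncomputable def avgPay (n : ℕ) (u : N → (∀ i, A i) → ℝ) (i : N)
    (σ : ∀ i, List (∀ j, A j) → A i → ℝ) : ℝ :=
  ∑ f : Fin n → (∀ i, A i), histProb σ [] (List.ofFn f) * ((∑ t, u i (f t)) / n)

/-- Nash equilibrium of the `n`-stage repeated game (behavioral strategies,
average payoffs). -/
def IsRepNash (n : ℕ) (u : N → (∀ i, A i) → ℝ)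
    (σ : ∀ i, List (∀ j, A j) → A i → ℝ) : Prop :=
  (∀ i h, IsMixed (σ i h)) ∧
  ∀ i τ, (∀ h, IsMixed (τ h)) →
    avgPay n u i (Function.update σ i τ) ≤ avgPay n u i σ

/-- Shannon entropy (base 2) of a mixed strategy, with the convention 0·log 0 = 0. -/
noncomputable def ent {α : Type} [Fintype α] (σ : α → ℝ) : ℝ :=
  ∑ a, -(σ a * Real.logb 2 (σ a))

/-- Shannon entropy of a behavioral strategy of player `i` in the `n`-stage repeated
game: the maximum over terminal histories of the summed stage entropies along the
non-terminal prefixes. -/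
noncomputable def repEnt (n : ℕ) {i : N} (σi : List (∀ j, A j) → A i → ℝ) : ℝ :=
  Finset.univ.sup' Finset.univ_nonempty
    (fun f : Fin n → (∀ i, A i) => ∑ t : Fin n, ent (σi ((List.ofFn f).take t)))

set_option linter.unusedSectionVars false

lemma sum_prod_eq_one (σ : ∀ i, A i → ℝ) (h : ∀ j, IsMixed (σ j)) :
    ∑ a : ∀ i, A i, ∏ j, σ j (a j) = 1 := by
  classical
  rw [← Fintype.piFinset_univ, ← Finset.prod_univ_sum]
  simp [(h _).2]

lemma sum_fn_succ {β : Type*} [Fintype β] {k : ℕ} (Φ : (Fin (k+1) → β) → ℝ) :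
    ∑ f, Φ f = ∑ a : β, ∑ g : Fin k → β, Φ (Fin.cons a g) := by
  rw [← Equiv.sum_comp (Fin.consEquiv (fun _ : Fin (k+1) => β)) Φ, Fintype.sum_prod_type]
  rfl

lemma ofFn_cons {β : Type*} {k : ℕ} (a : β) (g : Fin k → β) :
    List.ofFn (Fin.cons a g : Fin (k+1) → β) = a :: List.ofFn g := by
  simp [List.ofFn_succ]

noncomputable def contPay (k : ℕ) (ui : (∀ i, A i) → ℝ)
    (σ : ∀ i, List (∀ j, A j) → A i → ℝ) (g : List (∀ i, A i)) : ℝ :=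
  ∑ f : Fin k → (∀ i, A i), histProb σ g (List.ofFn f) * ∑ t, ui (f t)

lemma contPay_zero (ui : (∀ i, A i) → ℝ) (σ : ∀ i, List (∀ j, A j) → A i → ℝ)
    (g : List (∀ i, A i)) : contPay 0 ui σ g = 0 := by
  simp [contPay]

lemma histProb_total (σ : ∀ i, List (∀ j, A j) → A i → ℝ)
    (hmix : ∀ j g, IsMixed (σ j g)) (k : ℕ) :
    ∀ g, ∑ f : Fin k → (∀ i, A i), histProb σ g (List.ofFn f) = 1 := by
  induction k with
  | zero => intro g; simp [histProb]
  | succ k ih =>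
      intro g
      rw [sum_fn_succ]
      have h3 : ∀ a : ∀ i, A i, ∑ g' : Fin k → (∀ i, A i),
          histProb σ g (List.ofFn (Fin.cons a g' : Fin (k+1) → ∀ i, A i)) =
          ∏ j, σ j g (a j) := by
        intro a
        have : ∀ g' : Fin k → (∀ i, A i),
            histProb σ g (List.ofFn (Fin.cons a g' : Fin (k+1) → ∀ i, A i)) =
            (∏ j, σ j g (a j)) * histProb σ (g ++ [a]) (List.ofFn g') := by
          intro g'; rw [ofFn_cons]; rfl
        simp only [this, ← Finset.mul_sum, ih (g ++ [a]), mul_one]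
      simp only [h3]
      exact sum_prod_eq_one (fun j => σ j g) (fun j => hmix j g)

lemma contPay_succ (ui : (∀ i, A i) → ℝ) (σ : ∀ i, List (∀ j, A j) → A i → ℝ)
    (hmix : ∀ j g, IsMixed (σ j g)) (k : ℕ) (g : List (∀ i, A i)) :
    contPay (k+1) ui σ g =
      ∑ a : ∀ i, A i, (∏ j, σ j g (a j)) * (ui a + contPay k ui σ (g ++ [a])) := by
  unfold contPay
  rw [sum_fn_succ]
  refine Finset.sum_congr rfl fun a _ => ?_
  have h1 : ∀ g' : Fin k → (∀ i, A i),
      histProb σ g (List.ofFn (Fin.cons a g' : Fin (k+1) → ∀ i, A i)) *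
        (∑ t : Fin (k+1), ui ((Fin.cons a g' : Fin (k+1) → ∀ i, A i) t)) =
      (∏ j, σ j g (a j)) * (histProb σ (g ++ [a]) (List.ofFn g') *
        (ui a + ∑ t : Fin k, ui (g' t))) := by
    intro g'
    rw [ofFn_cons]
    show (∏ j, σ j g (a j)) * histProb σ (g ++ [a]) (List.ofFn g') * _ = _
    rw [Fin.sum_univ_succ]
    simp only [Fin.cons_zero, Fin.cons_succ]
    ring
  simp only [h1, ← Finset.mul_sum]
  congr 1
  have h2 : ∑ g' : Fin k → (∀ i, A i), histProb σ (g ++ [a]) (List.ofFn g') *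
      (ui a + ∑ t : Fin k, ui (g' t)) =
      ui a * (∑ g' : Fin k → (∀ i, A i), histProb σ (g ++ [a]) (List.ofFn g')) +
      contPay k ui σ (g ++ [a]) := by
    unfold contPay
    rw [Finset.mul_sum, ← Finset.sum_add_distrib]
    refine Finset.sum_congr rfl fun g' _ => ?_
    ring
  rw [h2, histProb_total σ hmix k (g ++ [a]), mul_one]
  rfl

lemma histProb_nonneg (σ : ∀ i, List (∀ j, A j) → A i → ℝ)
    (hmix : ∀ j g, IsMixed (σ j g)) :
    ∀ (l g : List (∀ i, A i)), 0 ≤ histProb σ g l := by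
  intro l
  induction l with
  | nil => intro g; exact zero_le_one
  | cons a rest ih =>
      intro g
      exact mul_nonneg (Finset.prod_nonneg fun j _ => (hmix j g).1 _) (ih (g ++ [a]))

lemma histProb_pos_cons (σ : ∀ i, List (∀ j, A j) → A i → ℝ)
    (g a l) (hp : 0 < (∏ j, σ j g (a j)) * histProb σ (g ++ [a]) l) :
    0 < histProb σ g (a :: l) := hp

lemma histProb_congr (σ σ' : ∀ i, List (∀ j, A j) → A i → ℝ) :
    ∀ (l g : List (∀ i, A i)), (∀ j l', σ' j (g ++ l') = σ j (g ++ l')) →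
    histProb σ' g l = histProb σ g l := by
  intro l
  induction l with
  | nil => intro g _; rfl
  | cons a rest ih =>
      intro g hag
      show (∏ j, σ' j g (a j)) * histProb σ' (g ++ [a]) rest = _
      have h1 : ∀ j, σ' j g = σ j g := fun j => by simpa using hag j []
      have h2 : histProb σ' (g ++ [a]) rest = histProb σ (g ++ [a]) rest := by
        refine ih (g ++ [a]) fun j l' => ?_
        have := hag j ([a] ++ l')
        simpa using this
      simp only [h1, h2]; rfl

lemma contPay_congr (ui : (∀ i, A i) → ℝ) (σ σ' : ∀ i, List (∀ j, A j) → A i → ℝ)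
    (k : ℕ) (g : List (∀ i, A i)) (hag : ∀ j l', σ' j (g ++ l') = σ j (g ++ l')) :
    contPay k ui σ' g = contPay k ui σ g := by
  unfold contPay
  exact Finset.sum_congr rfl fun f _ => by rw [histProb_congr σ σ' _ g hag]

lemma update_apply_hist (σ : ∀ i, List (∀ j, A j) → A i → ℝ) (i : N)
    (τ : List (∀ j, A j) → A i → ℝ) (g : List (∀ j, A j)) :
    (fun j => Function.update σ i τ j g) = Function.update (fun j => σ j g) i (τ g) := by
  funext j
  by_cases hj : j = i
  · subst hj; simp
  · simp [Function.update_of_ne hj]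

lemma exists_br (u : N → (∀ i, A i) → ℝ) (i : N) (vi : ℝ) (hvi : IsMinmaxVal u i vi)
    (σ0 : ∀ j, A j → ℝ) (hm : ∀ j, IsMixed (σ0 j)) :
    ∃ a : A i, vi ≤ expU (u i) (Function.update σ0 i (pureS a)) := by
  have hx := hvi.2 ⟨σ0, hm, rfl⟩
  rw [Finset.le_sup'_iff] at hx
  obtain ⟨a, _, ha⟩ := hx
  exact ⟨a, ha⟩

lemma pureS_mixed {α : Type} [Fintype α] [DecidableEq α] (a : α) : IsMixed (pureS a) := by
  constructor
  · intro b; unfold pureS; split <;> norm_num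
  · simp [pureS]

lemma avgPay_eq (n : ℕ) (u : N → (∀ i, A i) → ℝ) (i : N)
    (σ : ∀ i, List (∀ j, A j) → A i → ℝ) :
    avgPay n u i σ = contPay n (u i) σ [] / n := by
  unfold avgPay contPay
  rw [Finset.sum_div]
  exact Finset.sum_congr rfl fun f _ => (mul_div_assoc _ _ _).symm

lemma dev_bound (u : N → (∀ i, A i) → ℝ) (v : N → ℝ)
    (hv : ∀ i, IsMinmaxVal u i (v i)) (n : ℕ)
    (σ : ∀ i, List (∀ j, A j) → A i → ℝ) (hσ : IsRepNash n u σ)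
    (h : List (∀ i, A i)) (k : ℕ) (hk : h.length + (k + 1) = n)
    (hpos : 0 < histProb σ [] h) (i : N) (τ : A i → ℝ) (hτ : IsMixed τ) :
    expU (u i) (Function.update (fun j => σ j h) i τ) + k * v i ≤
      contPay (k + 1) (u i) σ h := by
  classical
  obtain ⟨hmix, hEq⟩ := hσ
  choose br hbr using fun g : List (∀ i, A i) =>
    exists_br u i (v i) (hv i) (fun j => σ j g) (fun j => hmix j g)
  set τ' : List (∀ j, A j) → A i → ℝ :=
    fun g => if g = h then τ else if h <+: g then pureS (br g) else σ i g with hτ'def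
  set σ' := Function.update σ i τ' with hσ'def
  have hτ'mix : ∀ g, IsMixed (τ' g) := by
    intro g
    simp only [hτ'def]
    split
    · exact hτ
    · split
      · exact pureS_mixed _
      · exact hmix i g
  have hσ'mix : ∀ j g, IsMixed (σ' j g) := by
    intro j g
    by_cases hj : j = i
    · subst hj; simp only [hσ'def, Function.update_self]; exact hτ'mix g
    · simp only [hσ'def, Function.update_of_ne hj]; exact hmix j g
  have hσ'at : ∀ g, (fun j => σ' j g) = Function.update (fun j => σ j g) i (τ' g) :=
    update_apply_hist σ i τ'
  have hσ'off : ∀ j g, ¬ (h <+: g) → σ' j g = σ j g := by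
    intro j g hng
    by_cases hj : j = i
    · subst hj
      simp only [hσ'def, Function.update_self, hτ'def]
      rw [if_neg, if_neg hng]
      rintro rfl; exact hng List.prefix_rfl
    · simp only [hσ'def, Function.update_of_ne hj]
  -- guarantee lemma
  have G : ∀ (k' : ℕ) (g : List (∀ i, A i)), h <+: g → h ≠ g →
      (k' : ℝ) * v i ≤ contPay k' (u i) σ' g := by
    intro k'
    induction k' with
    | zero => intro g _ _; rw [contPay_zero]; simp
    | succ k' ihk =>
        intro g hpre hne
        rw [contPay_succ (u i) σ' hσ'mix k' g]
        have hτ'g : τ' g = pureS (br g) := by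
          simp only [hτ'def]
          rw [if_neg (fun e => hne e.symm), if_pos hpre]
        have hstep : ∀ a : ∀ i, A i,
            (∏ j, σ' j g (a j)) * (u i a + (k' : ℝ) * v i) ≤
            (∏ j, σ' j g (a j)) * (u i a + contPay k' (u i) σ' (g ++ [a])) := by
          intro a
          refine mul_le_mul_of_nonneg_left ?_
            (Finset.prod_nonneg fun j _ => (hσ'mix j g).1 _)
          refine (add_le_add_iff_left _).mpr (ihk (g ++ [a]) (hpre.trans (List.prefix_append _ _)) ?_)
          intro e
          have h1 := congrArg List.length e
          have h2 := hpre.length_le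
          simp at h1
          omega
        refine le_trans ?_ (Finset.sum_le_sum fun a _ => hstep a)
        have hsum : ∑ a : ∀ i, A i, (∏ j, σ' j g (a j)) * (u i a + (k' : ℝ) * v i) =
            expU (u i) (Function.update (fun j => σ j g) i (pureS (br g))) +
              (k' : ℝ) * v i := by
          simp only [mul_add, Finset.sum_add_distrib, ← Finset.sum_mul]
          rw [sum_prod_eq_one (fun j => σ' j g) (fun j => hσ'mix j g), one_mul]
          congr 1
          unfold expU
          refine Finset.sum_congr rfl fun a _ => ?_
          congr 1
          refine Finset.prod_congr rfl fun j _ => ?_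
          rw [show σ' j g = Function.update (fun j => σ j g) i (τ' g) j from
            congrFun (hσ'at g) j, hτ'g]
        rw [hsum]
        have := hbr g
        push_cast
        linarith
  -- decomposition lemma
  have H : ∀ (d g : List (∀ i, A i)), g ++ d = h →
      contPay (d.length + (k + 1)) (u i) σ' g - contPay (d.length + (k + 1)) (u i) σ g =
      histProb σ g d *
        (contPay (k + 1) (u i) σ' h - contPay (k + 1) (u i) σ h) := by
    intro d
    induction d with
    | nil =>
        intro g hg
        simp only [List.append_nil] at hg
        subst hg
        simp [histProb]
    | cons a0 d' ih =>
        intro g hg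
        have hglt : g.length < h.length := by
          have := congrArg List.length hg
          simp at this; omega
        have hgoff : ∀ j, σ' j g = σ j g := by
          intro j
          refine hσ'off j g fun hpre => ?_
          have := hpre.length_le; omega
        have hlen1 : (a0 :: d').length + (k + 1) = (d'.length + (k + 1)) + 1 := by
          simp; omega
        rw [hlen1, contPay_succ (u i) σ' hσ'mix _ g, contPay_succ (u i) σ hmix _ g,
          ← Finset.sum_sub_distrib]
        have hterm : ∀ a : ∀ i, A i,
            (∏ j, σ' j g (a j)) * (u i a + contPay (d'.length + (k+1)) (u i) σ' (g ++ [a])) -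
            (∏ j, σ j g (a j)) * (u i a + contPay (d'.length + (k+1)) (u i) σ (g ++ [a])) =
            (∏ j, σ j g (a j)) *
              (contPay (d'.length + (k+1)) (u i) σ' (g ++ [a]) -
               contPay (d'.length + (k+1)) (u i) σ (g ++ [a])) := by
          intro a
          simp only [hgoff]
          ring
        simp only [hterm]
        rw [Finset.sum_eq_single a0]
        · have hih := ih (g ++ [a0]) (by rw [← hg]; simp)
          rw [hih]
          show _ = (∏ j, σ j g (a0 j)) * histProb σ (g ++ [a0]) d' * _
          ring
        · intro a _ hne
          have hcongr : contPay (d'.length + (k+1)) (u i) σ' (g ++ [a]) =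
              contPay (d'.length + (k+1)) (u i) σ (g ++ [a]) := by
            refine contPay_congr (u i) σ σ' _ _ fun j l' => ?_
            refine hσ'off j _ fun hpre => ?_
            have h1 : (g ++ [a]) <+: (g ++ [a]) ++ l' := List.prefix_append _ _
            have h2 : (g ++ [a]) <+: h := by
              refine List.prefix_of_prefix_length_le h1 hpre ?_
              simp; omega
            rw [← hg, List.prefix_append_right_inj] at h2
            rw [List.cons_prefix_cons] at h2
            exact hne h2.1
          rw [hcongr]; ring
        · simp
  -- apply equilibrium
  have hEqi := hEq i τ' hτ'mix
  rw [avgPay_eq, avgPay_eq, ← hσ'def] at hEqi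
  have hn : (0 : ℝ) < n := by
    have : 0 < n := by omega
    exact_mod_cast this
  have hcont : contPay n (u i) σ' [] ≤ contPay n (u i) σ [] :=
    (div_le_div_iff_of_pos_right hn).mp hEqi
  have hH := H h [] rfl
  rw [show h.length + (k + 1) = n from hk] at hH
  have hΔ : contPay (k + 1) (u i) σ' h ≤ contPay (k + 1) (u i) σ h := by
    nlinarith [hpos, hH, hcont]
  refine le_trans ?_ hΔ
  -- lower bound on contPay (k+1) σ' h
  rw [contPay_succ (u i) σ' hσ'mix k h]
  have hτ'h : τ' h = τ := by simp [hτ'def]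
  have hstep : ∀ a : ∀ i, A i,
      (∏ j, σ' j h (a j)) * (u i a + (k : ℝ) * v i) ≤
      (∏ j, σ' j h (a j)) * (u i a + contPay k (u i) σ' (h ++ [a])) := by
    intro a
    refine mul_le_mul_of_nonneg_left ?_
      (Finset.prod_nonneg fun j _ => (hσ'mix j h).1 _)
    refine (add_le_add_iff_left _).mpr (G k (h ++ [a]) (List.prefix_append _ _) ?_)
    intro e
    have := congrArg List.length e
    simp at this
  refine le_trans ?_ (Finset.sum_le_sum fun a _ => hstep a)
  have hsum : ∑ a : ∀ i, A i, (∏ j, σ' j h (a j)) * (u i a + (k : ℝ) * v i) =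
      expU (u i) (Function.update (fun j => σ j h) i τ) + (k : ℝ) * v i := by
    simp only [mul_add, Finset.sum_add_distrib, ← Finset.sum_mul]
    rw [sum_prod_eq_one (fun j => σ' j h) (fun j => hσ'mix j h), one_mul]
    congr 1
    unfold expU
    refine Finset.sum_congr rfl fun a _ => ?_
    congr 1
    refine Finset.prod_congr rfl fun j _ => ?_
    rw [show σ' j h = Function.update (fun j => σ j h) i (τ' h) j from
      congrFun (hσ'at h) j, hτ'h]
  rw [hsum]

lemma histProb_append (σ : ∀ i, List (∀ j, A j) → A i → ℝ) :
    ∀ (l₁ l₂ g : List (∀ i, A i)),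
      histProb σ g (l₁ ++ l₂) = histProb σ g l₁ * histProb σ (g ++ l₁) l₂ := by
  intro l₁
  induction l₁ with
  | nil => intro l₂ g; simp [histProb]
  | cons a l₁ ih =>
      intro l₂ g
      show (∏ j, σ j g (a j)) * histProb σ (g ++ [a]) (l₁ ++ l₂) = _
      rw [ih l₂ (g ++ [a])]
      show _ = (∏ j, σ j g (a j)) * histProb σ (g ++ [a]) l₁ * _
      have he : g ++ a :: l₁ = (g ++ [a]) ++ l₁ := by simp
      rw [he]
      ring

lemma hval_lemma (u : N → (∀ i, A i) → ℝ) (v : N → ℝ)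
    (σ : ∀ i, List (∀ j, A j) → A i → ℝ) (hmix : ∀ j g, IsMixed (σ j g))
    (k : ℕ) (h' : List (∀ i, A i)) (hp : 0 < histProb σ [] h')
    (j : N)
    (hchild : ∀ a, 0 < histProb σ [] (h' ++ [a]) →
      contPay k (u j) σ (h' ++ [a]) = k * v j) :
    contPay (k + 1) (u j) σ h' = expU (u j) (fun l => σ l h') + k * v j := by
  rw [contPay_succ (u j) σ hmix k h']
  have hterm : ∀ a : ∀ i, A i,
      (∏ l, σ l h' (a l)) * (u j a + contPay k (u j) σ (h' ++ [a])) =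
      (∏ l, σ l h' (a l)) * (u j a + (k : ℝ) * v j) := by
    intro a
    rcases lt_or_eq_of_le (Finset.prod_nonneg fun l _ => (hmix l h').1 (a l)) with hpa | hpa
    · congr 2
      refine hchild a ?_
      rw [histProb_append σ h' [a] []]
      simp only [List.nil_append]
      refine mul_pos hp ?_
      show 0 < (∏ l, σ l h' (a l)) * histProb σ (h' ++ [a]) []
      show 0 < (∏ l, σ l h' (a l)) * 1
      rw [mul_one]; exact hpa
    · rw [← hpa, zero_mul, zero_mul]
  simp only [hterm, mul_add, Finset.sum_add_distrib, ← Finset.sum_mul]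
  rw [sum_prod_eq_one (fun l => σ l h') (fun l => hmix l h'), one_mul]
  rfl

lemma nash_of_children (u : N → (∀ i, A i) → ℝ) (v : N → ℝ)
    (hv : ∀ i, IsMinmaxVal u i (v i)) (n : ℕ)
    (σ : ∀ i, List (∀ j, A j) → A i → ℝ) (hσ : IsRepNash n u σ)
    (h' : List (∀ i, A i)) (k : ℕ) (hlen : h'.length + (k + 1) = n)
    (hp : 0 < histProb σ [] h')
    (hchild : ∀ j (a : ∀ i, A i), 0 < histProb σ [] (h' ++ [a]) →
      contPay k (u j) σ (h' ++ [a]) = k * v j) :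
    IsNash u (fun j => σ j h') := by
  constructor
  · intro j; exact hσ.1 j h'
  · intro j τ hτ
    have hb := dev_bound u v hv n σ hσ h' k hlen hp j τ hτ
    have hval := hval_lemma u v σ hσ.1 k h' hp j (hchild j)
    rw [hval] at hb
    linarith

lemma contPay_val (u : N → (∀ i, A i) → ℝ) (v : N → ℝ)
    (hv : ∀ i, IsMinmaxVal u i (v i))
    (hpay : ∀ σ0, IsNash u σ0 → ∀ i, expU (u i) σ0 = v i) (n : ℕ)
    (σ : ∀ i, List (∀ j, A j) → A i → ℝ) (hσ : IsRepNash n u σ) :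
    ∀ (k : ℕ) (h' : List (∀ i, A i)), h'.length + k = n →
      0 < histProb σ [] h' → ∀ j, contPay k (u j) σ h' = k * v j := by
  intro k
  induction k with
  | zero => intro h' _ _ j; rw [contPay_zero]; simp
  | succ k ihk =>
      intro h' hlen hp j
      have hchild : ∀ j (a : ∀ i, A i), 0 < histProb σ [] (h' ++ [a]) →
          contPay k (u j) σ (h' ++ [a]) = k * v j := by
        intro j a hpa
        refine ihk (h' ++ [a]) ?_ hpa j
        simp at hlen ⊢; omega
      have hNash := nash_of_children u v hv n σ hσ h' k hlen hp hchild
      have hval := hval_lemma u v σ hσ.1 k h' hp j (hchild j)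
      rw [hval, hpay (fun l => σ l h') hNash j]
      push_cast
      ring

theorem stmt_5 (u : N → (∀ i, A i) → ℝ) (v : N → ℝ)
    (hv : ∀ i, IsMinmaxVal u i (v i))
    -- every Nash equilibrium payoff profile of the stage game equals the minmax profile
    (hpay : ∀ σ, IsNash u σ → ∀ i, expU (u i) σ = v i)
    (n : ℕ) (σ : ∀ i, List (∀ j, A j) → A i → ℝ)
    (hσ : IsRepNash n u σ)
    (h : List (∀ i, A i)) (hlen : h.length < n)
    (hpos : 0 < histProb σ [] h) :
    IsNash u (fun i => σ i h) := by
  obtain ⟨k, hk⟩ : ∃ k, h.length + (k + 1) = n := ⟨n - h.length - 1, by omega⟩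
  refine nash_of_children u v hv n σ hσ h k hk hpos ?_
  intro j a hpa
  refine contPay_val u v hv hpay n σ hσ k (h ++ [a]) ?_ hpa j
  simp; omega
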